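/- A finite EI category C satisfies the Unique Factorization Property if and only if every full subcategory of C satisfies the Unique Factorization Property. -/

import Mathlib

open CategoryTheory

/-- A morphism is unfactorizable if it is not an isomorphism and in any factorization into
two morphisms one factor is an isomorphism. -/
def Unfactorizable {C : Type*} [Category C] {x z : C} (α : x ⟶ z) : Prop :=
  ¬ IsIso α ∧ ∀ (y : C) (β : x ⟶ y) (γ : y ⟶ z), α = β ≫ γ → IsIso β ∨ IsIso γ

/-- A path in a category all of whose edges are unfactorizable morphisms. -/
inductive PathUnfact {C : Type*} [Category C] : ∀ {x y : C}, Quiver.Path x y → Prop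
  | nil {x : C} : PathUnfact (Quiver.Path.nil : Quiver.Path x x)
  | cons {x y z : C} {p : Quiver.Path x y} {e : y ⟶ z} :
      PathUnfact p → Unfactorizable e → PathUnfact (p.cons e)

/-- `TwistedBy p q g'` says that the paths `p = (α₁, …, αₙ)` and `q = (β₁, …, βₙ)` pass
through the same objects and there are automorphisms `hᵢ` of the intermediate objects with
`β₁ = h₁ ∘ α₁`, `βᵢ = hᵢ ∘ αᵢ ∘ hᵢ₋₁⁻¹`, and `βₙ = g' ∘ αₙ ∘ hₙ₋₁⁻¹`, where `g'` is the
final twist at the common target. -/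
inductive TwistedBy {C : Type*} [Category C] :
    ∀ {x y : C}, Quiver.Path x y → Quiver.Path x y → (y ≅ y) → Prop
  | nil {x : C} :
      TwistedBy (Quiver.Path.nil : Quiver.Path x x) Quiver.Path.nil (Iso.refl x)
  | cons {x w y : C} {p q : Quiver.Path x w} (g : w ≅ w) (g' : y ≅ y) (e : w ⟶ y) :
      TwistedBy p q g → TwistedBy (p.cons e) (q.cons (g.inv ≫ e ≫ g'.hom)) g'

/-- The Unique Factorization Property: any two decompositions of a non-isomorphism into
unfactorizable morphisms have the same length, pass through the same intermediate objects,
and differ only by automorphisms of the intermediate objects. -/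
def SatisfiesUFP (C : Type*) [Category C] : Prop :=
  ∀ {x y : C} (p q : Quiver.Path x y), PathUnfact p → PathUnfact q →
    ¬ IsIso (composePath p) → composePath p = composePath q → TwistedBy p q (Iso.refl y)

namespace UFPAux
open Quiver
variable {C : Type*} [Category C]

lemma isIso_of_roundtrip (hEI : ∀ (x : C) (f : x ⟶ x), IsIso f)
    {x y : C} (f : x ⟶ y) (g : y ⟶ x) : IsIso f := by
  have h1 : IsIso (f ≫ g) := hEI x _
  have h : y ⟶ x := g ≫ inv (f ≫ g)
  have hfh : f ≫ (g ≫ inv (f ≫ g)) = 𝟙 x := by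
    rw [← Category.assoc, IsIso.hom_inv_id]
  have h2 : IsIso ((g ≫ inv (f ≫ g)) ≫ f) := hEI y _
  have hlf : (inv ((g ≫ inv (f ≫ g)) ≫ f) ≫ (g ≫ inv (f ≫ g))) ≫ f = 𝟙 y := by
    rw [Category.assoc, IsIso.inv_hom_id]
  have hle : inv ((g ≫ inv (f ≫ g)) ≫ f) ≫ (g ≫ inv (f ≫ g)) = g ≫ inv (f ≫ g) := by
    have h3 : ((inv ((g ≫ inv (f ≫ g)) ≫ f) ≫ (g ≫ inv (f ≫ g))) ≫ f) ≫
        (g ≫ inv (f ≫ g)) = g ≫ inv (f ≫ g) := by rw [hlf, Category.id_comp]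
    rw [Category.assoc, hfh, Category.comp_id] at h3
    exact h3
  exact ⟨g ≫ inv (f ≫ g), hfh, by rw [← hle]; exact hlf⟩

lemma isIso_left_of_comp (hEI : ∀ (x : C) (f : x ⟶ x), IsIso f)
    {x y z : C} {f : x ⟶ y} {g : y ⟶ z} (h : IsIso (f ≫ g)) : IsIso f :=
  isIso_of_roundtrip hEI f (g ≫ inv (f ≫ g))

lemma isIso_right_of_comp (hEI : ∀ (x : C) (f : x ⟶ x), IsIso f)
    {x y z : C} {f : x ⟶ y} {g : y ⟶ z} (h : IsIso (f ≫ g)) : IsIso g :=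
  isIso_of_roundtrip hEI g (inv (f ≫ g) ≫ f)

lemma not_isIso_composePath (hEI : ∀ (x : C) (f : x ⟶ x), IsIso f)
    {x y : C} {p : Quiver.Path x y} (hp : PathUnfact p) (hlen : 0 < p.length) :
    ¬ IsIso (composePath p) := by
  cases hp with
  | nil => simp at hlen
  | @cons _ _ p e hp he =>
    intro hiso
    rw [composePath_cons] at hiso
    exact he.1 (isIso_right_of_comp hEI hiso)

lemma pathUnfact_comp {x y z : C} {p : Quiver.Path x y} :
    ∀ {q : Quiver.Path y z}, PathUnfact p → PathUnfact q → PathUnfact (p.comp q)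
  | Quiver.Path.nil, hp, _ => hp
  | Quiver.Path.cons q e, hp, hq => by
    cases hq with
    | cons hq' he => exact PathUnfact.cons (pathUnfact_comp hp hq') he

lemma pathUnfact_of_comp {x y z : C} {p : Quiver.Path x y} :
    ∀ {q : Quiver.Path y z}, PathUnfact (p.comp q) → PathUnfact p ∧ PathUnfact q
  | Quiver.Path.nil, h => ⟨h, PathUnfact.nil⟩
  | Quiver.Path.cons q e, h => by
    rw [Quiver.Path.comp_cons] at h
    cases h with
    | cons h' he =>
      obtain ⟨h1, h2⟩ := pathUnfact_of_comp h'
      exact ⟨h1, PathUnfact.cons h2 he⟩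

section Measure
variable {C : Type*} [Category C]

/-- Measure: number of objects admitting a morphism into `x`. -/
noncomputable def meas (x : C) : ℕ := Set.ncard {z : C | Nonempty (z ⟶ x)}

lemma finite_of_finite_sigma [Finite (Σ x y : C, x ⟶ y)] : Finite C :=
  Finite.of_injective (fun x : C => (⟨x, x, 𝟙 x⟩ : Σ x y : C, x ⟶ y))
    (fun _ _ h => congrArg Sigma.fst h)

lemma meas_lt [Finite (Σ x y : C, x ⟶ y)] (hEI : ∀ (x : C) (f : x ⟶ x), IsIso f)
    {x y : C} (f : x ⟶ y) (hf : ¬ IsIso f) : meas x < meas y := by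
  have : Finite C := finite_of_finite_sigma
  apply Set.ncard_lt_ncard
  · constructor
    · rintro z ⟨g⟩
      exact ⟨g ≫ f⟩
    · intro hsub
      have hy : Nonempty (y ⟶ y) := ⟨𝟙 y⟩
      have : Nonempty (y ⟶ x) := hsub hy
      obtain ⟨g⟩ := this
      exact hf (isIso_of_roundtrip hEI f g)
  · exact Set.toFinite _

lemma exists_unfact_path_aux [Finite (Σ x y : C, x ⟶ y)]
    (hEI : ∀ (x : C) (f : x ⟶ x), IsIso f) :
    ∀ (n : ℕ) {x y : C} (f : x ⟶ y), ¬ IsIso f → meas y - meas x ≤ n →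
      ∃ p : Quiver.Path x y, PathUnfact p ∧ 0 < p.length ∧ composePath p = f := by
  intro n
  induction n with
  | zero =>
    intro x y f hf hn
    exact absurd hn (by have := meas_lt hEI f hf; omega)
  | succ n ih =>
    intro x y f hf hn
    by_cases hu : Unfactorizable f
    · refine ⟨(Quiver.Path.nil).cons f, PathUnfact.cons PathUnfact.nil hu, by simp, by simp⟩
    · unfold Unfactorizable at hu
      push_neg at hu
      obtain ⟨w, β, γ, hfac, hβ, hγ⟩ := hu hf
      have h1 := meas_lt hEI β hβ
      have h2 := meas_lt hEI γ hγ
      obtain ⟨p₁, hp₁, hl₁, hc₁⟩ := ih β hβ (by omega)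
      obtain ⟨p₂, hp₂, hl₂, hc₂⟩ := ih γ hγ (by omega)
      refine ⟨p₁.comp p₂, pathUnfact_comp hp₁ hp₂, ?_, ?_⟩
      · rw [Quiver.Path.length_comp]; omega
      · rw [composePath_comp, hc₁, hc₂, hfac]

lemma exists_unfact_path [Finite (Σ x y : C, x ⟶ y)]
    (hEI : ∀ (x : C) (f : x ⟶ x), IsIso f) {x y : C} (f : x ⟶ y) (hf : ¬ IsIso f) :
    ∃ p : Quiver.Path x y, PathUnfact p ∧ 0 < p.length ∧ composePath p = f :=
  exists_unfact_path_aux hEI (meas y - meas x) f hf le_rfl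

end Measure
section Twist
variable {C : Type*} [Category C]

/-- Generalized twisting with an initial twist `g₀`. -/
inductive TwistedSeg {x : C} (g₀ : x ≅ x) :
    ∀ {y : C}, Quiver.Path x y → Quiver.Path x y → (y ≅ y) → Prop
  | nil : TwistedSeg g₀ Quiver.Path.nil Quiver.Path.nil g₀
  | cons {w y : C} {p q : Quiver.Path x w} (g : w ≅ w) (g' : y ≅ y) (e : w ⟶ y) :
      TwistedSeg g₀ p q g → TwistedSeg g₀ (p.cons e) (q.cons (g.inv ≫ e ≫ g'.hom)) g'

lemma TwistedBy.toSeg {x y : C} {p q : Quiver.Path x y} {g : y ≅ y}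
    (h : TwistedBy p q g) : TwistedSeg (Iso.refl x) p q g := by
  induction h with
  | nil => exact TwistedSeg.nil
  | cons g g' e _ ih => exact TwistedSeg.cons g g' e ih

lemma TwistedSeg.toTwistedBy {x y : C} {p q : Quiver.Path x y} {g : y ≅ y}
    (h : TwistedSeg (Iso.refl x) p q g) : TwistedBy p q g := by
  induction h with
  | nil => exact TwistedBy.nil
  | cons g g' e _ ih => exact TwistedBy.cons g g' e ih

lemma TwistedSeg.length_eq {x y : C} {g₀ : x ≅ x} {p q : Quiver.Path x y} {g : y ≅ y}
    (h : TwistedSeg g₀ p q g) : p.length = q.length := by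
  induction h with
  | nil => rfl
  | cons g g' e _ ih => simpa using ih

lemma TwistedSeg.composePath_eq {x y : C} {g₀ : x ≅ x} {p q : Quiver.Path x y} {g : y ≅ y}
    (h : TwistedSeg g₀ p q g) : composePath q = g₀.inv ≫ composePath p ≫ g.hom := by
  induction h with
  | nil => simp
  | @cons w y p q gm g' e _ ih =>
    rw [composePath_cons, composePath_cons, ih]
    simp [Category.assoc]

lemma cons_inj' {C' : Type*} [Quiver C'] {a c : C'} {b b' : C'} {p : Quiver.Path a b}
    {q : Quiver.Path a b'} {e : b ⟶ c} {f : b' ⟶ c}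
    (h : p.cons e = q.cons f) : b = b' ∧ HEq p q ∧ HEq e f := by
  injection h with h1 h2 h3 h4
  exact ⟨h1, h3, h4⟩

lemma TwistedSeg.split {x w : C} {g₀ : x ≅ x} :
    ∀ {y : C} (r : Quiver.Path w y) {A : Quiver.Path x w} {Q : Quiver.Path x y} {g : y ≅ y},
      TwistedSeg g₀ (A.comp r) Q g →
      ∃ (B : Quiver.Path x w) (s : Quiver.Path w y) (gm : w ≅ w),
        Q = B.comp s ∧ TwistedSeg g₀ A B gm ∧ TwistedSeg gm r s g
  | _, Quiver.Path.nil, A, Q, g, h => ⟨Q, Quiver.Path.nil, g, rfl, h, TwistedSeg.nil⟩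
  | _, Quiver.Path.cons r e, A, Q, g, h => by
    rw [Quiver.Path.comp_cons] at h
    cases h with
    | @cons w' y p q gm g' e' hpq =>
      obtain ⟨B, s, gmid, hQ, hAB, hrs⟩ := TwistedSeg.split r hpq
      exact ⟨B, s.cons (gm.inv ≫ e ≫ g.hom), gmid, by rw [hQ, Quiver.Path.comp_cons],
        hAB, TwistedSeg.cons gm g e hrs⟩

lemma split_suffix {C' : Type*} [Quiver C'] :
    ∀ {b' c : C'} (t : Quiver.Path b' c) {a b : C'} (B : Quiver.Path a b)
      (s : Quiver.Path b c) (Q' : Quiver.Path a b'),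
      B.comp s = Q'.comp t → t.length ≤ s.length →
      ∃ u : Quiver.Path b b', s = u.comp t ∧ Q' = B.comp u
  | _, _, Quiver.Path.nil, a, b, B, s, Q', heq, _ => ⟨s, rfl, heq.symm⟩
  | _, _, Quiver.Path.cons t e, a, b, B, s, Q', heq, hlen => by
    cases s with
    | nil => simp [Quiver.Path.length] at hlen
    | @cons w _ s' e' =>
      rw [Quiver.Path.comp_cons, Quiver.Path.comp_cons] at heq
      obtain ⟨hw, hp, he⟩ := cons_inj' heq
      subst hw
      have hp' : B.comp s' = Q'.comp t := eq_of_heq hp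
      have he' : e' = e := eq_of_heq he
      subst he'
      have hlen' : t.length ≤ s'.length := by
        simp [Quiver.Path.length] at hlen; omega
      obtain ⟨u, hs, hQ⟩ := split_suffix t B s' Q' hp' hlen'
      exact ⟨u, by rw [hs, Quiver.Path.comp_cons], hQ⟩

lemma path_eq_of_length_zero {C' : Type*} [Quiver C'] :
    ∀ {a b : C'} (u : Quiver.Path a b), u.length = 0 → a = b
  | _, _, Quiver.Path.nil, _ => rfl
  | _, _, Quiver.Path.cons _ _, h => by simp [Quiver.Path.length] at h

end Twist
section Sub
variable {C : Type*} [Category C] {S : Set C}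

abbrev Sub (S : Set C) := ObjectProperty.FullSubcategory fun x : C => x ∈ S

def toC {X Y : Sub S} (f : X ⟶ Y) : X.obj ⟶ Y.obj := f.hom

def ofC {X Y : Sub S} (f : X.obj ⟶ Y.obj) : X ⟶ Y := ⟨f⟩

lemma isIso_toC {X Y : Sub S} {f : X ⟶ Y} : IsIso (toC f) ↔ IsIso f := by
  constructor
  · rintro ⟨i, h1, h2⟩
    exact ⟨ofC i, by ext; exact h1, by ext; exact h2⟩
  · rintro ⟨i, h1, h2⟩
    exact ⟨toC i, congrArg InducedCategory.Hom.hom h1, congrArg InducedCategory.Hom.hom h2⟩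

def liftIso {X : Sub S} (g : X.obj ≅ X.obj) : X ≅ X where
  hom := ofC g.hom
  inv := ofC g.inv
  hom_inv_id := by ext; exact g.hom_inv_id
  inv_hom_id := by ext; exact g.inv_hom_id

lemma liftIso_refl {X : Sub S} : liftIso (Iso.refl X.obj) = Iso.refl X :=
  Iso.ext rfl

/-- `Refines p P` : `P` is a refinement of the subcategory path `p` obtained by decomposing
each edge of `p` into a nonempty path of morphisms unfactorizable in the big category. -/
inductive Refines : ∀ {X Y : Sub S}, Quiver.Path X Y → Quiver.Path X.obj Y.obj → Prop
  | nil {X : Sub S} : Refines (Quiver.Path.nil : Quiver.Path X X) Quiver.Path.nil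
  | cons {X Y Z : Sub S} {p : Quiver.Path X Y} {P : Quiver.Path X.obj Y.obj}
      (e : Y ⟶ Z) (r : Quiver.Path Y.obj Z.obj) :
      Refines p P → PathUnfact r → 0 < r.length → composePath r = toC e →
      Refines (p.cons e) (P.comp r)

lemma Refines.length_zero_iff {X Y : Sub S} {p : Quiver.Path X Y}
    {P : Quiver.Path X.obj Y.obj} (h : Refines p P) : p.length = 0 ↔ P.length = 0 := by
  induction h with
  | nil => simp
  | cons e r _ _ hrlen _ ih =>
    constructor
    · intro h; simp [Quiver.Path.length] at h
    · intro h; rw [Quiver.Path.length_comp] at h; omega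

lemma Refines.pathUnfact {X Y : Sub S} {p : Quiver.Path X Y}
    {P : Quiver.Path X.obj Y.obj} (h : Refines p P) : PathUnfact P := by
  induction h with
  | nil => exact PathUnfact.nil
  | cons e r _ hru _ _ ih => exact pathUnfact_comp ih hru

lemma Refines.compose {X Y : Sub S} {p : Quiver.Path X Y}
    {P : Quiver.Path X.obj Y.obj} (h : Refines p P) :
    composePath P = toC (composePath p) := by
  induction h with
  | nil => rfl
  | cons e r _ _ _ hrc ih =>
    rw [composePath_comp, ih, hrc]
    rfl

lemma refines_exists [Finite (Σ x y : C, x ⟶ y)] (hEI : ∀ (x : C) (f : x ⟶ x), IsIso f)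
    {X Y : Sub S} {p : Quiver.Path X Y} (hp : PathUnfact p) :
    ∃ P : Quiver.Path X.obj Y.obj, Refines p P := by
  induction hp with
  | nil => exact ⟨Quiver.Path.nil, Refines.nil⟩
  | @cons _ _ p e hp' hue ih =>
    obtain ⟨P, hP⟩ := ih
    have hni : ¬ IsIso (toC e) := fun h => hue.1 (isIso_toC.1 h)
    obtain ⟨r, hru, hrlen, hrc⟩ := exists_unfact_path hEI (toC e) hni
    exact ⟨P.comp r, Refines.cons e r hP hru hrlen hrc⟩

lemma main [Finite (Σ x y : C, x ⟶ y)] (hEI : ∀ (x : C) (f : x ⟶ x), IsIso f)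
    {X Y : Sub S} (p : Quiver.Path X Y) :
    ∀ (q : Quiver.Path X Y) (P Q : Quiver.Path X.obj Y.obj)
      (g₀ : X.obj ≅ X.obj) (g : Y.obj ≅ Y.obj),
      PathUnfact p → PathUnfact q → Refines p P → Refines q Q → PathUnfact Q →
      TwistedSeg g₀ P Q g → TwistedSeg (liftIso g₀) p q (liftIso g) := by
  induction p with
  | nil =>
    intro q P Q g₀ g hp hq hrp hrq hQu hT
    cases hrp
    cases hT
    have hq0 : q.length = 0 := hrq.length_zero_iff.2 rfl
    have hqn : q = Quiver.Path.nil := Quiver.Path.eq_nil_of_length_zero q hq0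
    subst hqn
    exact TwistedSeg.nil
  | @cons W _ p' e ih =>
    intro q P Q g₀ g hp hq hrp hrq hQu hT
    cases hp with
    | cons hp' hue =>
    cases hrp
    rename_i P' r hru hrlen hrp' hrc
    obtain ⟨B, s, gm, hQ, hTB, hTs⟩ := TwistedSeg.split r hT
    have hslen : r.length = s.length := hTs.length_eq
    have hq0 : q.length ≠ 0 := by
      intro h
      have := hrq.length_zero_iff.1 h
      rw [hQ, Quiver.Path.length_comp] at this
      omega
    cases q with
    | nil => simp at hq0
    | @cons W' _ q' f =>
    cases hq with
    | cons hq' huf =>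
    cases hrq
    rename_i Q' t hrt htlen hrq' hrtc
    -- hQ : Q'.comp t = B.comp s
    have hsPU : PathUnfact s := (pathUnfact_of_comp (hQ.symm ▸ hQu)).2
    have hscomp : composePath s = gm.inv ≫ toC e ≫ g.hom := by
      rw [hTs.composePath_eq, hrc]
    rcases lt_trichotomy t.length s.length with hlt | hle | hgt
    · -- t shorter than s : contradiction with unfactorizability of e in the subcategory
      obtain ⟨u, hsu, hQ'⟩ := split_suffix t B s Q' hQ.symm (le_of_lt hlt)
      have hulen : 0 < u.length := by
        have := congrArg Quiver.Path.length hsu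
        rw [Quiver.Path.length_comp] at this
        omega
      have huPU : PathUnfact u := (pathUnfact_of_comp (hsu ▸ hsPU)).1
      have huni : ¬ IsIso (composePath u) := not_isIso_composePath hEI huPU hulen
      have hsplit : composePath s = composePath u ≫ toC f := by
        rw [hsu, composePath_comp, hrtc]
      have hC : toC e = (gm.hom ≫ composePath u) ≫ (toC f ≫ g.inv) := by
        have h1 : gm.hom ≫ composePath s ≫ g.inv = toC e := by
          rw [hscomp]; simp
        rw [← h1, hsplit]; simp
      have hfac : e = ofC (gm.hom ≫ composePath u) ≫ ofC (toC f ≫ g.inv) := by ext; exact hC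
      rcases hue.2 W' _ _ hfac with hiso | hiso
      · have : IsIso (gm.hom ≫ composePath u) := isIso_toC.2 hiso
        exact absurd (isIso_right_of_comp hEI this) huni
      · have : IsIso (toC f ≫ g.inv) := isIso_toC.2 hiso
        exact absurd (isIso_toC.1 (isIso_left_of_comp hEI this)) huf.1
    · -- equal lengths : recurse
      obtain ⟨u, hsu, hQ'⟩ := split_suffix t B s Q' hQ.symm (le_of_eq hle)
      have hulen : u.length = 0 := by
        have := congrArg Quiver.Path.length hsu
        rw [Quiver.Path.length_comp] at this
        omega
      have hobj : W.obj = W'.obj := path_eq_of_length_zero u hulen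
      have hW : W = W' := ObjectProperty.FullSubcategory.ext hobj
      subst hW
      have hun : u = Quiver.Path.nil := Quiver.Path.eq_nil_of_length_zero u hulen
      subst hun
      rw [Quiver.Path.nil_comp] at hsu
      rw [Quiver.Path.comp_nil] at hQ'
      subst hQ'
      have hQPU' : PathUnfact Q' := (pathUnfact_of_comp (hQ ▸ hQu)).1
      have hseg := ih q' P' Q' g₀ gm hp' hq' hrp' hrq' hQPU' hTB
      have hfC : toC f = toC (liftIso gm).inv ≫ toC e ≫ toC (liftIso g).hom := by
        rw [← hrtc, ← hsu, hscomp]; rfl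
      have hf : f = (liftIso gm).inv ≫ e ≫ (liftIso g).hom := by ext; exact hfC
      rw [hf]
      exact TwistedSeg.cons (liftIso gm) (liftIso g) e hseg
    · -- s shorter than t : contradiction with unfactorizability of f in the subcategory
      obtain ⟨u, htu, hB⟩ := split_suffix s Q' t B hQ (le_of_lt hgt)
      have hulen : 0 < u.length := by
        have := congrArg Quiver.Path.length htu
        rw [Quiver.Path.length_comp] at this
        omega
      have huPU : PathUnfact u := (pathUnfact_of_comp (htu ▸ hrt)).1
      have huni : ¬ IsIso (composePath u) := not_isIso_composePath hEI huPU hulen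
      have hC : toC f = (composePath u ≫ gm.inv) ≫ (toC e ≫ g.hom) := by
        rw [← hrtc, htu, composePath_comp, hscomp]
        simp
      have hfac : f = ofC (composePath u ≫ gm.inv) ≫ ofC (toC e ≫ g.hom) := by ext; exact hC
      rcases huf.2 W _ _ hfac with hiso | hiso
      · have : IsIso (composePath u ≫ gm.inv) := isIso_toC.2 hiso
        exact absurd (isIso_left_of_comp hEI this) huni
      · have : IsIso (toC e ≫ g.hom) := isIso_toC.2 hiso
        exact absurd (isIso_toC.1 (isIso_left_of_comp hEI this)) hue.1

end Sub
section Assemble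
variable {C : Type*} [Category C]

lemma forward [Finite (Σ x y : C, x ⟶ y)] (hEI : ∀ (x : C) (f : x ⟶ x), IsIso f)
    (hU : SatisfiesUFP C) (S : Set C) : SatisfiesUFP (Sub S) := by
  intro X Y p q hp hq hniso hcomp
  obtain ⟨P, hrp⟩ := refines_exists hEI hp
  obtain ⟨Q, hrq⟩ := refines_exists hEI hq
  have hPc : composePath P = toC (composePath p) := hrp.compose
  have hQc : composePath Q = toC (composePath q) := hrq.compose
  have hPn : ¬ IsIso (composePath P) := by
    rw [hPc]
    intro h
    exact hniso (isIso_toC.1 h)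
  have hPQ : composePath P = composePath Q := by
    rw [hPc, hQc]
    exact congrArg toC hcomp
  have hTS := TwistedBy.toSeg (hU P Q hrp.pathUnfact hrq.pathUnfact hPn hPQ)
  have hm := main hEI p q P Q (Iso.refl X.obj) (Iso.refl Y.obj) hp hq hrp hrq
    hrq.pathUnfact hTS
  rw [liftIso_refl, liftIso_refl] at hm
  exact hm.toTwistedBy

def liftO (x : C) : Sub (Set.univ : Set C) := ⟨x, trivial⟩

def upFun : Prefunctor C (Sub (Set.univ : Set C)) where
  obj := liftO
  map := fun f => ofC f

lemma liftPath_length {x y : C} (p : Quiver.Path x y) :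
    (upFun.mapPath p).length = p.length := by
  induction p with
  | nil => rfl
  | cons p e ih =>
    rw [Prefunctor.mapPath_cons]
    show (upFun.mapPath p).length + 1 = p.length + 1
    rw [ih]


lemma unfact_lift {x y : C} {e : x ⟶ y} (he : Unfactorizable e) :
    Unfactorizable (ofC e : liftO x ⟶ liftO y) := by
  constructor
  · intro h
    exact he.1 (isIso_toC.2 h)
  · intro Y' β γ hfac
    have hfac' : e = toC β ≫ toC γ := congrArg InducedCategory.Hom.hom hfac
    rcases he.2 Y'.obj (toC β) (toC γ) hfac' with h | h
    · exact Or.inl (isIso_toC.1 h)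
    · exact Or.inr (isIso_toC.1 h)

lemma liftPath_unfact {x y : C} {p : Quiver.Path x y} (hp : PathUnfact p) :
    PathUnfact (upFun.mapPath p) := by
  induction hp with
  | nil =>
    rw [Prefunctor.mapPath_nil]
    exact PathUnfact.nil
  | cons hp' he ih =>
    rw [Prefunctor.mapPath_cons]
    exact PathUnfact.cons ih (unfact_lift he)

lemma liftPath_compose {x y : C} (p : Quiver.Path x y) :
    composePath (upFun.mapPath p) = ofC (composePath p) := by
  induction p with
  | nil =>
    rw [Prefunctor.mapPath_nil]
    rfl
  | cons p e ih =>
    rw [Prefunctor.mapPath_cons, composePath_cons, ih]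
    rfl

def lowerIso {x : C} (G : liftO x ≅ liftO x) : x ≅ x where
  hom := toC G.hom
  inv := toC G.inv
  hom_inv_id := congrArg InducedCategory.Hom.hom G.hom_inv_id
  inv_hom_id := congrArg InducedCategory.Hom.hom G.inv_hom_id

lemma lowerIso_refl {x : C} : lowerIso (Iso.refl (liftO x)) = Iso.refl x :=
  Iso.ext rfl

lemma lowerIso_refl' {x : C} : lowerIso (Iso.refl ((upFun (C := C)).obj x)) = Iso.refl x :=
  Iso.ext rfl

lemma lower_twisted {x : C} : ∀ {y : C} (p q : Quiver.Path x y) (G : liftO y ≅ liftO y),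
    TwistedBy (upFun.mapPath p) (upFun.mapPath q) G → TwistedBy p q (lowerIso G) := by
  intro y p
  induction p with
  | nil =>
    intro q G h
    rw [Prefunctor.mapPath_nil] at h
    generalize hQ : upFun.mapPath q = Q at h
    cases h
    have hq0 : q.length = 0 := by
      have := congrArg Quiver.Path.length hQ
      rw [liftPath_length] at this
      exact this
    have hqn : q = Quiver.Path.nil := Quiver.Path.eq_nil_of_length_zero q hq0
    subst hqn
    rw [lowerIso_refl']
    exact TwistedBy.nil
  | @cons W _ p' e ih =>
    intro q G h
    rw [Prefunctor.mapPath_cons] at h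
    generalize hQ : upFun.mapPath q = Q at h
    show TwistedBy (p'.cons e) q (lowerIso G)
    cases h
    rename_i q₁ g hT
    cases q with
    | nil =>
      have := congrArg Quiver.Path.length hQ
      rw [liftPath_length] at this
      simp [Quiver.Path.length] at this
    | @cons W' _ q'' f =>
      rw [Prefunctor.mapPath_cons] at hQ
      obtain ⟨hb, hpq, hef⟩ := cons_inj' hQ
      have hWW : W' = W := congrArg ObjectProperty.FullSubcategory.obj hb
      subst hWW
      have hq₁ : upFun.mapPath q'' = q₁ := eq_of_heq hpq
      have hfe : (upFun.map f : _ ⟶ _) = g.inv ≫ upFun.map e ≫ G.hom := eq_of_heq hef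
      rw [← hq₁] at hT
      have hlow := ih q'' g hT
      have hf : f = (lowerIso g).inv ≫ e ≫ (lowerIso G).hom := congrArg InducedCategory.Hom.hom hfe
      rw [hf]
      exact TwistedBy.cons (lowerIso g) (lowerIso G) e hlow

lemma backward (h : SatisfiesUFP (Sub (Set.univ : Set C))) : SatisfiesUFP C := by
  intro x y p q hp hq hniso hcomp
  have h1 := liftPath_unfact hp
  have h2 := liftPath_unfact hq
  have hn : ¬ IsIso (composePath (upFun.mapPath p)) := by
    rw [liftPath_compose]
    intro hi
    exact hniso (isIso_toC.2 hi)
  have hcomp' : composePath (upFun.mapPath p) = composePath (upFun.mapPath q) := by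
    rw [liftPath_compose, liftPath_compose]
    exact congrArg ofC hcomp
  have hT := h (upFun.mapPath p) (upFun.mapPath q) h1 h2 hn hcomp'
  have hl := lower_twisted p q (Iso.refl _) hT
  rw [lowerIso_refl] at hl
  exact hl

end Assemble
end UFPAux

/-- A skeletal finite EI category satisfies the Unique Factorization Property if and only
if every full subcategory of it satisfies the Unique Factorization Property. -/
theorem stmt13 {C : Type*} [Category C] [Finite (Σ x y : C, x ⟶ y)]
    (hEI : ∀ (x : C) (f : x ⟶ x), IsIso f)
    (hskel : ∀ x y : C, (x ≅ y) → x = y) :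
    SatisfiesUFP C ↔ ∀ S : Set C, SatisfiesUFP (ObjectProperty.FullSubcategory fun x => x ∈ S) := by
  constructor
  · intro hU S
    exact UFPAux.forward hEI hU S
  · intro h
    exact UFPAux.backward (h Set.univ)
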